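/- In a dagger category, if f∂ : B ⟶ A is a †-Drazin inverse of f : A ⟶ B, then f ≫ f∂ : A ⟶ A and f∂ ≫ f : B ⟶ B are partial isometries, and each is its own †-Drazin inverse: f ≫ f∂ is a †-Drazin inverse of f ≫ f∂, and f∂ ≫ f is a †-Drazin inverse of f∂ ≫ f. -/
import Mathlib


open CategoryTheory

universe v u

/-- A dagger on a category: an identity-on-objects contravariant involution. -/
structure Dagger (C : Type u) [Category.{v} C] where
  dag : ∀ {X Y : C}, (X ⟶ Y) → (Y ⟶ X)
  dag_id : ∀ X : C, dag (𝟙 X) = 𝟙 X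
  dag_comp : ∀ {X Y Z : C} (f : X ⟶ Y) (g : Y ⟶ Z), dag (f ≫ g) = dag g ≫ dag f
  dag_dag : ∀ {X Y : C} (f : X ⟶ Y), dag (dag f) = f

/-- Iterated composition power of an endomorphism, with `cpow x 0 = 𝟙 A`. -/
def cpow {C : Type u} [Category.{v} C] {A : C} (x : A ⟶ A) : ℕ → (A ⟶ A)
  | 0 => 𝟙 A
  | n + 1 => cpow x n ≫ x

/-- `p` is a †-Drazin inverse of `f`. -/
def IsDagDrazinInv {C : Type u} [Category.{v} C] (D : Dagger C)
    {A B : C} (f : A ⟶ B) (p : B ⟶ A) : Prop :=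
  (∃ k : ℕ, cpow (f ≫ D.dag f) k ≫ f ≫ p = cpow (f ≫ D.dag f) k ∧
    p ≫ f ≫ cpow (D.dag f ≫ f) k = cpow (D.dag f ≫ f) k) ∧
  p ≫ f ≫ p = p ∧
  D.dag (f ≫ p) = f ≫ p ∧
  D.dag (p ≫ f) = p ≫ f

/-- A self-adjoint idempotent is its own †-Drazin inverse. -/
lemma dagDrazin_of_idem {C : Type u} [Category.{v} C] (D : Dagger C)
    {A : C} (e : A ⟶ A) (hee : e ≫ e = e) (hd : D.dag e = e) :
    IsDagDrazinInv D e e := by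
  have h1 : cpow (e ≫ D.dag e) 1 = e := by simp [cpow, hd, hee]
  have h2 : cpow (D.dag e ≫ e) 1 = e := by simp [cpow, hd, hee]
  exact ⟨⟨1, by rw [h1, hee, hee], by rw [h2, hee, hee]⟩,
    by rw [hee, hee], by rw [hee, hd], by rw [hee, hd]⟩

/-- If `p` is a †-Drazin inverse of `f`, then `f ≫ p` and `p ≫ f` are partial isometries
and each is its own †-Drazin inverse. -/
theorem dagDrazinInv_idempotents {C : Type u} [Category.{v} C] (D : Dagger C)
    {A B : C} (f : A ⟶ B) (p : B ⟶ A) (h : IsDagDrazinInv D f p) :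
    (f ≫ p) ≫ D.dag (f ≫ p) ≫ (f ≫ p) = f ≫ p ∧
    (p ≫ f) ≫ D.dag (p ≫ f) ≫ (p ≫ f) = p ≫ f ∧
    IsDagDrazinInv D (f ≫ p) (f ≫ p) ∧
    IsDagDrazinInv D (p ≫ f) (p ≫ f) := by
  obtain ⟨-, hp, he, hg⟩ := h
  have hee : (f ≫ p) ≫ (f ≫ p) = f ≫ p := by simp [hp]
  have hgg : (p ≫ f) ≫ (p ≫ f) = p ≫ f := by simp [reassoc_of% hp]
  refine ⟨by rw [he, hee, hee], by rw [hg, hgg, hgg],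
    dagDrazin_of_idem D _ hee he, dagDrazin_of_idem D _ hgg hg⟩
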